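/- Let Z be a Banach space, let γ_1, …, γ_q ∈ ℝ^d (1 ≤ q ≤ d) be linearly independent, and let Γ be the lattice they generate. Then X_{Γ,Z} = C_u(ℝ^d/Γ, Z) ⊕ C_0(ℝ^d, Z) = {v + w : v Γ-periodic bounded uniformly continuous, w bounded uniformly continuous tending to 0 at infinity} is a closed linear subspace of C_u(ℝ^d, Z). -/

import Mathlib

open MeasureTheory Filter Topology BoundedContinuousFunction

/-- The set `X_{Γ,Z} = C_u(ℝ^d/Γ, Z) ⊕ C₀(ℝ^d, Z)` of Peregrine-type profiles inside
the space of bounded continuous functions: sums `v + w` with `v` uniformly continuous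
and `Γ`-periodic and `w` uniformly continuous tending to `0` at infinity. -/
def peregrineSpace {Z : Type*} [NormedAddCommGroup Z] {d q : ℕ}
    (γ : Fin q → EuclideanSpace ℝ (Fin d)) :
    Set (EuclideanSpace ℝ (Fin d) →ᵇ Z) :=
  {u | ∃ v w : EuclideanSpace ℝ (Fin d) →ᵇ Z,
    UniformContinuous v ∧
    (∀ (n : Fin q → ℤ) (x : EuclideanSpace ℝ (Fin d)), v (x + ∑ j, n j • γ j) = v x) ∧
    UniformContinuous w ∧
    Tendsto w (cocompact (EuclideanSpace ℝ (Fin d))) (𝓝 0) ∧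
    u = v + w}

private lemma peregrine_aux_norm_le {Z : Type*} [NormedAddCommGroup Z] {d : ℕ}
    (γ0 : EuclideanSpace ℝ (Fin d)) (hγ0 : γ0 ≠ 0)
    (v w : EuclideanSpace ℝ (Fin d) →ᵇ Z)
    (hper : ∀ (k : ℕ) (x : EuclideanSpace ℝ (Fin d)), v (x + k • γ0) = v x)
    (hw : Tendsto w (cocompact (EuclideanSpace ℝ (Fin d))) (𝓝 0))
    (x : EuclideanSpace ℝ (Fin d)) : ‖v x‖ ≤ ‖v + w‖ := by
  have hshift : Tendsto (fun k : ℕ => x + k • γ0) atTop (cocompact _) := by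
    rw [← Metric.cobounded_eq_cocompact, ← tendsto_norm_atTop_iff_cobounded]
    have h1 : Tendsto (fun k : ℕ => (k : ℝ) * ‖γ0‖ - ‖x‖) atTop atTop := by
      apply Tendsto.atTop_add _ tendsto_const_nhds
      exact Tendsto.atTop_mul_const (norm_pos_iff.mpr hγ0) tendsto_natCast_atTop_atTop
    refine tendsto_atTop_mono (fun k => ?_) h1
    have hn : ‖(k : ℕ) • γ0‖ = (k : ℝ) * ‖γ0‖ := by
      rw [← Nat.cast_smul_eq_nsmul ℝ, norm_smul, Real.norm_natCast]
    have h2 : ‖(k:ℕ) • γ0‖ ≤ ‖x + (k:ℕ) • γ0‖ + ‖x‖ := by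
      calc ‖(k:ℕ) • γ0‖ = ‖(x + (k:ℕ) • γ0) - x‖ := by rw [add_sub_cancel_left]
        _ ≤ ‖x + (k:ℕ) • γ0‖ + ‖x‖ := norm_sub_le _ _
    linarith
  refine le_of_forall_pos_le_add fun ε hε => ?_
  have hev : ∀ᶠ y in cocompact (EuclideanSpace ℝ (Fin d)), ‖w y‖ < ε := by
    have := hw
    rw [NormedAddCommGroup.tendsto_nhds_zero] at this
    exact this ε hε
  obtain ⟨k, hk⟩ := (hshift.eventually hev).exists
  calc ‖v x‖ = ‖v (x + k • γ0)‖ := by rw [hper k x]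
    _ ≤ ‖(v + w) (x + k • γ0)‖ + ‖w (x + k • γ0)‖ := by
        rw [BoundedContinuousFunction.add_apply]
        exact norm_le_add_norm_add _ _
    _ ≤ ‖v + w‖ + ε := add_le_add (norm_coe_le_norm _ _) hk.le

private lemma peregrine_aux_uc_limit {Z : Type*} [NormedAddCommGroup Z] {d : ℕ}
    (f : ℕ → EuclideanSpace ℝ (Fin d) →ᵇ Z) (hf : ∀ n, UniformContinuous (f n))
    (g : EuclideanSpace ℝ (Fin d) →ᵇ Z) (h : Tendsto f atTop (𝓝 g)) :
    UniformContinuous g := by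
  rw [Metric.uniformContinuous_iff]
  intro ε hε
  obtain ⟨N, hN⟩ := Metric.tendsto_atTop.mp h (ε/3) (by linarith)
  have hn : dist (f N) g < ε/3 := hN N le_rfl
  set n := N
  obtain ⟨δ, hδ, hδ'⟩ := Metric.uniformContinuous_iff.mp (hf n) (ε/3) (by linarith)
  refine ⟨δ, hδ, fun {a b} hab => ?_⟩
  have h1 : dist (g a) (f n a) ≤ dist (f n) g := by
    rw [dist_comm]; exact BoundedContinuousFunction.dist_coe_le_dist a
  have h2 : dist (f n b) (g b) ≤ dist (f n) g := BoundedContinuousFunction.dist_coe_le_dist b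
  calc dist (g a) (g b) ≤ dist (g a) (f n a) + dist (f n a) (f n b) + dist (f n b) (g b) :=
        dist_triangle4 _ _ _ _
    _ < ε/3 + ε/3 + ε/3 := by
        have := hδ' hab
        linarith
    _ = ε := by ring


private lemma peregrine_aux_single {d q : ℕ} (γ : Fin q → EuclideanSpace ℝ (Fin d))
    (i : Fin q) (k : ℕ) :
    ∑ j, (Pi.single i (k : ℤ) : Fin q → ℤ) j • γ j = (k : ℕ) • γ i := by
  rw [Finset.sum_eq_single i]
  · simp [natCast_zsmul]
  · intro b _ hb
    simp [Pi.single_apply, hb]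
  · simp

/-- `X_{Γ,Z} = C_u(ℝ^d/Γ, Z) ⊕ C₀(ℝ^d, Z)` is a closed linear
subspace of `C_u(ℝ^d, Z)` (viewed inside the bounded continuous functions with the sup
norm): it is closed, and stable under addition and scalar multiplication. -/
theorem peregrine_stmt10 {Z : Type*} [NormedAddCommGroup Z] [NormedSpace ℝ Z]
    [CompleteSpace Z] {d q : ℕ} (hq : 1 ≤ q) (hqd : q ≤ d)
    (γ : Fin q → EuclideanSpace ℝ (Fin d)) (hγ : LinearIndependent ℝ γ) :
    IsClosed (peregrineSpace (Z := Z) γ) ∧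
    (∀ u₁ ∈ peregrineSpace (Z := Z) γ, ∀ u₂ ∈ peregrineSpace (Z := Z) γ,
      u₁ + u₂ ∈ peregrineSpace (Z := Z) γ) ∧
    (∀ (c : ℝ), ∀ u ∈ peregrineSpace (Z := Z) γ, c • u ∈ peregrineSpace (Z := Z) γ) := by
  set i0 : Fin q := ⟨0, hq⟩
  have hγ0 : γ i0 ≠ 0 := hγ.ne_zero i0
  refine ⟨?_, ?_, ?_⟩
  · -- closedness
    refine IsSeqClosed.isClosed ?_
    intro f u hf hfu
    choose v w hv hper hwuc hw0 hsum using hf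
    -- nat-shift periodicity of differences
    have hper1 : ∀ n m (k : ℕ) (x : EuclideanSpace ℝ (Fin d)),
        (v n - v m) (x + k • γ i0) = (v n - v m) x := by
      intro n m k x
      have h1 := hper n (Pi.single i0 (k : ℤ)) x
      have h2 := hper m (Pi.single i0 (k : ℤ)) x
      rw [peregrine_aux_single γ i0 k] at h1 h2
      simp only [BoundedContinuousFunction.coe_sub, Pi.sub_apply, h1, h2]
    -- key norm bound
    have hbound : ∀ n m, ‖v n - v m‖ ≤ ‖f n - f m‖ := by
      intro n m
      have hwnm : Tendsto (w n - w m) (cocompact (EuclideanSpace ℝ (Fin d))) (𝓝 0) := by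
        have := (hw0 n).sub (hw0 m)
        rw [sub_zero] at this
        exact this
      have heq : (v n - v m) + (w n - w m) = f n - f m := by
        rw [hsum n, hsum m]; abel
      refine (BoundedContinuousFunction.norm_le (norm_nonneg _)).mpr fun x => ?_
      calc ‖(v n - v m) x‖ ≤ ‖(v n - v m) + (w n - w m)‖ :=
            peregrine_aux_norm_le (γ i0) hγ0 _ _ (hper1 n m) hwnm x
        _ = ‖f n - f m‖ := by rw [heq]
    -- v is Cauchy, converges to V
    have hcf : CauchySeq f := hfu.cauchySeq
    have hcv : CauchySeq v := by
      rw [Metric.cauchySeq_iff] at hcf ⊢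
      intro ε hε
      obtain ⟨N, hN⟩ := hcf ε hε
      refine ⟨N, fun n hn m hm => ?_⟩
      have := hN n hn m hm
      rw [dist_eq_norm] at this ⊢
      exact lt_of_le_of_lt (hbound n m) this
    obtain ⟨V, hV⟩ := cauchySeq_tendsto_of_complete hcv
    -- pointwise convergence
    have hVpt : ∀ x, Tendsto (fun n => v n x) atTop (𝓝 (V x)) := by
      intro x
      exact ((BoundedContinuousFunction.tendsto_iff_tendstoUniformly).mp hV).tendsto_at x
    -- periodicity of V
    have hVper : ∀ (n : Fin q → ℤ) (x : EuclideanSpace ℝ (Fin d)),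
        V (x + ∑ j, n j • γ j) = V x := by
      intro n x
      refine tendsto_nhds_unique ?_ (hVpt x)
      have : (fun k => v k (x + ∑ j, n j • γ j)) = fun k => v k x := by
        funext k; exact hper k n x
      rw [← this]
      exact hVpt _
    -- uniform continuity of V and u
    have hVuc : UniformContinuous V := peregrine_aux_uc_limit v hv V hV
    have huuc : UniformContinuous u := by
      refine peregrine_aux_uc_limit f (fun n => ?_) u hfu
      rw [hsum n]
      have : ((v n + w n : EuclideanSpace ℝ (Fin d) →ᵇ Z) : EuclideanSpace ℝ (Fin d) → Z)
          = (v n : _ → Z) + (w n : _ → Z) := by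
        funext x; simp
      show UniformContinuous ((v n + w n : EuclideanSpace ℝ (Fin d) →ᵇ Z) : _ → Z)
      rw [this]
      exact (hv n).add (hwuc n)
    -- define W and show it tends to 0
    set W : EuclideanSpace ℝ (Fin d) →ᵇ Z := u - V with hWdef
    have hwW : Tendsto (fun n => w n) atTop (𝓝 W) := by
      have : Tendsto (fun n => f n - v n) atTop (𝓝 (u - V)) := hfu.sub hV
      have heq : (fun n => f n - v n) = fun n => w n := by
        funext n; rw [hsum n]; abel
      rw [heq] at this
      exact this
    have hW0 : Tendsto W (cocompact (EuclideanSpace ℝ (Fin d))) (𝓝 0) := by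
      rw [NormedAddCommGroup.tendsto_nhds_zero]
      intro ε hε
      obtain ⟨N, hN⟩ := Metric.tendsto_atTop.mp hwW (ε/2) (by linarith)
      have hNd : ‖w N - W‖ < ε/2 := by
        have := hN N le_rfl; rwa [dist_eq_norm] at this
      have hev : ∀ᶠ x in cocompact (EuclideanSpace ℝ (Fin d)), ‖w N x‖ < ε/2 := by
        have := hw0 N
        rw [NormedAddCommGroup.tendsto_nhds_zero] at this
        exact this (ε/2) (by linarith)
      filter_upwards [hev] with x hx
      calc ‖W x‖ ≤ ‖W x - w N x‖ + ‖w N x‖ := by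
            have := norm_add_le (W x - w N x) (w N x); simpa using this
        _ < ε/2 + ε/2 := by
            refine add_lt_add_of_le_of_lt ?_ hx
            have : ‖(w N - W) x‖ ≤ ‖w N - W‖ := norm_coe_le_norm _ _
            rw [BoundedContinuousFunction.sub_apply] at this
            rw [norm_sub_rev]
            exact le_trans this hNd.le
        _ = ε := by ring
    exact ⟨V, W, hVuc, hVper, huuc.sub hVuc, hW0, by rw [hWdef]; abel⟩
  · -- addition
    rintro u₁ ⟨v₁, w₁, hv₁, hp₁, hw₁, h0₁, rfl⟩ u₂ ⟨v₂, w₂, hv₂, hp₂, hw₂, h0₂, rfl⟩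
    refine ⟨v₁ + v₂, w₁ + w₂, ?_, ?_, ?_, ?_, by abel⟩
    · show UniformContinuous ((v₁ + v₂ : _ →ᵇ Z) : _ → Z)
      have : ((v₁ + v₂ : _ →ᵇ Z) : _ → Z) = (v₁ : _ → Z) + v₂ := by funext x; simp
      rw [this]; exact hv₁.add hv₂
    · intro n x; simp [hp₁ n x, hp₂ n x]
    · show UniformContinuous ((w₁ + w₂ : _ →ᵇ Z) : _ → Z)
      have : ((w₁ + w₂ : _ →ᵇ Z) : _ → Z) = (w₁ : _ → Z) + w₂ := by funext x; simp
      rw [this]; exact hw₁.add hw₂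
    · have := h0₁.add h0₂
      simp only [add_zero] at this
      have heq : ((w₁ + w₂ : _ →ᵇ Z) : _ → Z) = fun x => w₁ x + w₂ x := by funext x; simp
      rw [heq]; exact this
  · -- scalar multiplication
    rintro c u ⟨v, w, hv, hp, hw, h0, rfl⟩
    refine ⟨c • v, c • w, ?_, ?_, ?_, ?_, by module⟩
    · show UniformContinuous ((c • v : _ →ᵇ Z) : _ → Z)
      have : ((c • v : _ →ᵇ Z) : _ → Z) = fun x => c • v x := by funext x; simp
      rw [this]; exact hv.const_smul c
    · intro n x; simp [hp n x]
    · show UniformContinuous ((c • w : _ →ᵇ Z) : _ → Z)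
      have : ((c • w : _ →ᵇ Z) : _ → Z) = fun x => c • w x := by funext x; simp
      rw [this]; exact hw.const_smul c
    · have := h0.const_smul c
      simp only [smul_zero] at this
      have heq : ((c • w : _ →ᵇ Z) : _ → Z) = fun x => c • w x := by funext x; simp
      rw [heq]; exact this
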